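/- In the category of Hilbert spaces and injective linear contractions, the sequential diagram ℂ → ℂ → ℂ → ⋯ in which each map is scalar multiplication by 1/2 has no colimit. -/

import Mathlib

open CategoryTheory CategoryTheory.Limits

/-- The category of complex Hilbert spaces and injective linear contractions. -/
structure HilbMonoCat : Type 1 where
  carrier : Type
  [nacg : NormedAddCommGroup carrier]
  [ips : InnerProductSpace ℂ carrier]
  [cs : CompleteSpace carrier]

attribute [instance] HilbMonoCat.nacg HilbMonoCat.ips HilbMonoCat.cs

instance : Category HilbMonoCat where
  Hom A B := { f : A.carrier →L[ℂ] B.carrier // ‖f‖ ≤ 1 ∧ Function.Injective f }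
  id A := ⟨ContinuousLinearMap.id ℂ A.carrier,
    ContinuousLinearMap.norm_id_le, fun _ _ h => h⟩
  comp f g := ⟨g.1.comp f.1,
    le_trans (ContinuousLinearMap.opNorm_comp_le _ _)
      (mul_le_one₀ g.2.1 (norm_nonneg _) f.2.1),
    g.2.2.comp f.2.2⟩
  id_comp f := Subtype.ext (ContinuousLinearMap.comp_id _)
  comp_id f := Subtype.ext (ContinuousLinearMap.id_comp _)
  assoc f g h := rfl

/-- The complex numbers `ℂ` as an object. -/
noncomputable def Cobj : HilbMonoCat := ⟨ℂ⟩

/-- Scalar multiplication by `1/2` as an injective linear contraction `ℂ ⟶ ℂ`. -/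
noncomputable def halfMap : Cobj ⟶ Cobj :=
  ⟨(2⁻¹ : ℂ) • ContinuousLinearMap.id ℂ ℂ,
    by
      have key : ‖(2⁻¹ : ℂ) • ContinuousLinearMap.id ℂ ℂ‖ ≤ 1 := by
        rw [norm_smul, ContinuousLinearMap.norm_id]
        norm_num
      exact key,
    by
      have key : Function.Injective ((2⁻¹ : ℂ) • ContinuousLinearMap.id ℂ ℂ) := by
        intro x y h
        have h' : (2⁻¹ : ℂ) • x = (2⁻¹ : ℂ) • y := by
          simpa [ContinuousLinearMap.smul_apply] using h
        exact smul_right_injective ℂ (by norm_num : (2⁻¹ : ℂ) ≠ 0) h'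
      exact key⟩

/-- In the category of Hilbert spaces and injective linear contractions, the sequential
diagram `ℂ → ℂ → ℂ → ⋯` in which each map is multiplication by `1/2` has no colimit. -/
theorem stmt_18 : ¬ HasColimit (Functor.ofSequence (fun _ : ℕ => halfMap)) := by
  intro h
  set F := Functor.ofSequence (fun _ : ℕ => halfMap) with hF
  let c := colimit.cocone F
  let ι : ∀ n : ℕ, Cobj ⟶ c.pt := fun n => c.ι.app n
  have hstep : ∀ (n : ℕ) (x : ℂ), (ι n).1 x = (ι (n + 1)).1 ((2⁻¹ : ℂ) * x) := by
    intro n x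
    have e := c.w (homOfLE (Nat.le_succ n))
    have e1 : (ι (n + 1)).1 ((F.map (homOfLE (Nat.le_succ n))).1 x) = (ι n).1 x :=
      congrArg (fun f => f.1 x) e
    have e2 : F.map (homOfLE (Nat.le_succ n)) = halfMap :=
      Functor.ofSequence_map_homOfLE_succ _ n
    have e3 : (F.map (homOfLE (Nat.le_succ n))).1 x = (2⁻¹ : ℂ) * x := by
      rw [e2]; rfl
    rw [← e1, e3]
  have key : ∀ n : ℕ, (ι 0).1 (1 : ℂ) = (ι n).1 ((2⁻¹ : ℂ) ^ n) := by
    intro n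
    induction n with
    | zero => norm_num
    | succ n ih =>
      rw [ih, hstep n]
      ring_nf
  have hb : ∀ n : ℕ, ‖(ι 0).1 (1 : ℂ)‖ ≤ (2⁻¹ : ℝ) ^ n := by
    intro n
    rw [key n]
    calc ‖(ι n).1 ((2⁻¹ : ℂ) ^ n)‖ ≤ ‖(ι n).1‖ * ‖((2⁻¹ : ℂ) ^ n)‖ :=
          (ι n).1.le_opNorm _
      _ ≤ 1 * (2⁻¹ : ℝ) ^ n := by
          apply mul_le_mul (ι n).2.1 (by simp) (norm_nonneg _) zero_le_one
      _ = (2⁻¹ : ℝ) ^ n := one_mul _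
  have hz : (ι 0).1 (1 : ℂ) = 0 := by
    have ht : Filter.Tendsto (fun n : ℕ => (2⁻¹ : ℝ) ^ n) Filter.atTop (nhds 0) :=
      tendsto_pow_atTop_nhds_zero_of_lt_one (by norm_num) (by norm_num)
    have : ‖(ι 0).1 (1 : ℂ)‖ ≤ 0 := ge_of_tendsto ht (Filter.Eventually.of_forall hb)
    simpa using le_antisymm this (norm_nonneg _)
  have : (1 : ℂ) = 0 := (ι 0).2.2 (hz.trans (map_zero (ι 0).1).symm)
  simp at this
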